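/- arXiv:2512.18701 — 2 statements merged into one kernel-verified Lean document; each statement's English description precedes it below -/
import Mathlib

section
/- Let p, η > 0, q_min > 0, and let q : [0,T]×ℝ → ℝ be bounded and measurable with q ≥ q_min, such that for each t the map x ↦ q(t,x) is continuous. Define the exponential nonlocal term W_η(t,x) = ((p/η) ∫_x^∞ e^{p(x−y)/η} q(t,y)^p dy)^{1/p}. Then for every (t,x) ∈ [0,T]×ℝ, the function x ↦ W_η(t,x) is differentiable at x and the identity q(t,x)^p = W_η(t,x)^p − η W_η(t,x)^{p−1} ∂_x W_η(t,x) holds. -/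
open MeasureTheory Real Set Filter Function

noncomputable section

/-- The essential total variation of `f : ℝ → ℝ`: the infimum of the pointwise
total variation over all representatives of the a.e.-equivalence class of `f`. -/
def essTV (f : ℝ → ℝ) : ENNReal :=
  ⨅ g ∈ {g : ℝ → ℝ | g =ᵐ[volume] f}, eVariationOn g Set.univ

/-- The `L^∞(ℝ)` norm of `f : ℝ → ℝ` (essential supremum of `|f|`). -/
def linf (f : ℝ → ℝ) : ℝ :=
  essSup (fun x => |f x|) volume

/-- The nonlocal `p`-norm operator `W_{p,η}[q,γ]` with kernel `γ` and nonlocal reach `η`. -/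
def Wnl (p η : ℝ) (γ : ℝ → ℝ) (q : ℝ → ℝ → ℝ) (t x : ℝ) : ℝ :=
  (η⁻¹ * ∫ y in Set.Ioi x, (γ ((y - x) / η) * q t y) ^ p) ^ p⁻¹

/-- The exponential-kernel nonlocal operator (kernel `exp(-·)` normalized in `L^p`,
whence the factor `p`). -/
def Wexp (p η : ℝ) (q : ℝ → ℝ → ℝ) (t x : ℝ) : ℝ :=
  ((p / η) * ∫ y in Set.Ioi x, Real.exp (p * (x - y) / η) * q t y ^ p) ^ p⁻¹

/-- Admissible test functions on `(-∞,T) × ℝ`: `C¹`, compactly supported,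
vanishing for `t ≥ T`. -/
def TestFun (T : ℝ) (φ : ℝ → ℝ → ℝ) : Prop :=
  ContDiff ℝ 1 (Function.uncurry φ) ∧ HasCompactSupport (Function.uncurry φ) ∧
    ∀ t x : ℝ, T ≤ t → φ t x = 0

/-- `q` is a weak solution of `∂ₜ q + ∂ₓ (V(w(t,x)) q) = 0`, `q(0,·) = q₀`,
for the given velocity field `w`. -/
def IsWeakSol (T : ℝ) (V : ℝ → ℝ) (w : ℝ → ℝ → ℝ) (q₀ : ℝ → ℝ)
    (q : ℝ → ℝ → ℝ) : Prop :=
  ∀ φ : ℝ → ℝ → ℝ, TestFun T φ →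
    (∫ t in Set.Ioc (0 : ℝ) T, ∫ x : ℝ,
        (deriv (fun s => φ s x) t + V (w t x) * deriv (fun y => φ t y) x) * q t x)
      + (∫ x : ℝ, q₀ x * φ 0 x) = 0

/-- Membership in `C([0,T]; L¹_loc(ℝ))`. -/
def ContL1loc (T : ℝ) (q : ℝ → ℝ → ℝ) : Prop :=
  (∀ t ∈ Set.Icc (0 : ℝ) T, ∀ K : Set ℝ, IsCompact K → IntegrableOn (q t) K volume) ∧
    ∀ s ∈ Set.Icc (0 : ℝ) T, ∀ K : Set ℝ, IsCompact K →
      Filter.Tendsto (fun t => ∫ x in K, |q t x - q s x|)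
        (nhdsWithin s (Set.Icc 0 T)) (nhds 0)

/-- `V ∈ W^{2,∞}_loc(ℝ)`: `C¹` with locally Lipschitz first derivative. -/
def W2inftyLoc (V : ℝ → ℝ) : Prop :=
  ContDiff ℝ 1 V ∧
    ∀ K : Set ℝ, IsCompact K → ∃ L : NNReal, LipschitzOnWith L (deriv V) K

/-- Standing assumptions on the kernel `γ`: nonnegative, monotonically decreasing,
`W^{2,1}(ℝ_{>0})` (encoded as `C²` with integrable derivatives), `‖γ‖_{L^p(ℝ_{>0})} = 1`. -/
def KernelAss (p : ℝ) (γ : ℝ → ℝ) : Prop :=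
  (∀ x ∈ Set.Ioi (0 : ℝ), 0 ≤ γ x) ∧ AntitoneOn γ (Set.Ioi 0) ∧
    ContDiffOn ℝ 2 γ (Set.Ioi 0) ∧
    IntegrableOn γ (Set.Ioi 0) ∧ IntegrableOn (deriv γ) (Set.Ioi 0) ∧
    IntegrableOn (deriv (deriv γ)) (Set.Ioi 0) ∧
    (∫ y in Set.Ioi (0 : ℝ), γ y ^ p) = 1

/-- The solution class for the exponential-kernel nonlocal conservation law:
`C([0,T];L¹_loc)`, the maximum principle bounds, the initial datum, and the weak
formulation. `q_η` denotes the unique element of this class. -/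
def ExpSol (T p η qmin : ℝ) (V q₀ : ℝ → ℝ) (q : ℝ → ℝ → ℝ) : Prop :=
  ContL1loc T q ∧
    (∀ t ∈ Set.Icc (0 : ℝ) T, ∀ᵐ x : ℝ, qmin ≤ q t x ∧ q t x ≤ linf q₀) ∧
    (∀ᵐ x : ℝ, q 0 x = q₀ x) ∧
    IsWeakSol T V (Wexp p η q) q₀ q
/-- For the exponential nonlocal term
`W_η(t,x) = ((p/η) ∫_x^∞ e^{p(x-y)/η} q(t,y)^p dy)^{1/p}` of a bounded function `q ≥ q_min`
which is continuous in space, `x ↦ W_η(t,x)` is differentiable and the identity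
`q(t,x)^p = W_η(t,x)^p - η W_η(t,x)^{p-1} ∂ₓ W_η(t,x)` holds. -/
theorem exp_nonlocal_identity
    (T p η qmin M : ℝ) (q : ℝ → ℝ → ℝ)
    (hT : 0 < T) (hp : 0 < p) (hη : 0 < η) (hqmin : 0 < qmin)
    (hmeas : Measurable (Function.uncurry q))
    (hlow : ∀ t ∈ Set.Icc (0 : ℝ) T, ∀ x : ℝ, qmin ≤ q t x)
    (hupp : ∀ t ∈ Set.Icc (0 : ℝ) T, ∀ x : ℝ, q t x ≤ M)
    (hcont : ∀ t ∈ Set.Icc (0 : ℝ) T, Continuous (q t)) :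
    ∀ t ∈ Set.Icc (0 : ℝ) T, ∀ x : ℝ, ∃ d : ℝ,
      HasDerivAt (fun z => Wexp p η q t z) d x ∧
      q t x ^ p = Wexp p η q t x ^ p - η * Wexp p η q t x ^ (p - 1) * d := by
  intro t ht x
  have hq0 : ∀ y, 0 < q t y := fun y => lt_of_lt_of_le hqmin (hlow t ht y)
  set g : ℝ → ℝ := fun y => Real.exp (-(p / η * y)) * q t y ^ p with hgdef
  have contg : Continuous g :=
    (Real.continuous_exp.comp (continuous_const.mul continuous_id).neg).mul
      ((hcont t ht).rpow_const fun y => Or.inr hp.le)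
  have hgpos : ∀ y, 0 < g y := fun y =>
    mul_pos (Real.exp_pos _) (Real.rpow_pos_of_pos (hq0 y) p)
  have hgint : ∀ a : ℝ, IntegrableOn g (Set.Ioi a) volume := by
    intro a
    have hexp : IntegrableOn (fun y => M ^ p * Real.exp (-(p / η) * y)) (Set.Ioi a) volume :=
      (exp_neg_integrableOn_Ioi a (div_pos hp hη)).const_mul _
    refine Integrable.mono hexp contg.aestronglyMeasurable (ae_of_all _ fun y => ?_)
    have h1 : q t y ^ p ≤ M ^ p := Real.rpow_le_rpow (hq0 y).le (hupp t ht y) hp.le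
    have h2 : g y ≤ M ^ p * Real.exp (-(p / η) * y) := by
      have he : -(p / η * y) = -(p / η) * y := by ring
      simp only [hgdef, he]
      calc Real.exp (-(p / η) * y) * q t y ^ p
          ≤ Real.exp (-(p / η) * y) * M ^ p :=
            mul_le_mul_of_nonneg_left h1 (Real.exp_pos _).le
        _ = M ^ p * Real.exp (-(p / η) * y) := by ring
    have hMp : (0:ℝ) < M ^ p := Real.rpow_pos_of_pos (lt_of_lt_of_le hqmin
      (le_trans (hlow t ht 0) (hupp t ht 0))) p
    rw [Real.norm_eq_abs, Real.norm_eq_abs, abs_of_pos (hgpos y),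
      abs_of_pos (mul_pos hMp (Real.exp_pos _))]
    exact h2
  set G : ℝ → ℝ := fun u => ∫ y in Set.Ioi u, g y with hGdef
  have hsplit : ∀ u : ℝ, x - 1 ≤ u → G u = G (x - 1) - ∫ y in (x-1)..u, g y := by
    intro u hu
    have hunion : Set.Ioc (x-1) u ∪ Set.Ioi u = Set.Ioi (x-1) := Set.Ioc_union_Ioi_eq_Ioi hu
    have hsum := setIntegral_union (Set.Ioc_disjoint_Ioi le_rfl) measurableSet_Ioi
      ((hgint (x-1)).mono_set Set.Ioc_subset_Ioi_self) (hgint u) (f := g) (μ := volume)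
    rw [hunion] at hsum
    rw [intervalIntegral.integral_of_le hu]
    simp only [hGdef]
    rw [hsum]
    ring
  have hftc : HasDerivAt (fun u => ∫ y in (x-1)..u, g y) (g x) x :=
    intervalIntegral.integral_hasDerivAt_right (contg.intervalIntegrable _ _)
      (contg.stronglyMeasurableAtFilter _ _) contg.continuousAt
  have hG : HasDerivAt G (-(g x)) x := by
    have h1 : HasDerivAt (fun u => G (x-1) - ∫ y in (x-1)..u, g y) (0 - g x) x :=
      (hasDerivAt_const x (G (x-1))).sub hftc
    rw [zero_sub] at h1
    refine h1.congr_of_eventuallyEq ?_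
    filter_upwards [Ioi_mem_nhds (show x - 1 < x by linarith)] with u hu
    exact hsplit u (le_of_lt hu)
  have hGpos : ∀ u : ℝ, 0 < G u := by
    intro u
    simp only [hGdef]
    rw [setIntegral_pos_iff_support_of_nonneg_ae (ae_of_all _ fun y => (hgpos y).le) (hgint u)]
    have hsupp : Function.support g ∩ Set.Ioi u = Set.Ioi u :=
      Set.inter_eq_self_of_subset_right fun y _ => (hgpos y).ne'
    rw [hsupp, Real.volume_Ioi]
    exact ENNReal.zero_lt_top
  set E : ℝ → ℝ := fun u => Real.exp (p / η * u) with hEdef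
  set K : ℝ → ℝ := fun u => p / η * (E u * G u) with hKdef
  have hW : ∀ u : ℝ, Wexp p η q t u = K u ^ p⁻¹ := by
    intro u
    simp only [hKdef, hEdef, hGdef]
    unfold Wexp
    congr 2
    rw [show (fun y => Real.exp (p * (u - y) / η) * q t y ^ p)
        = fun y => Real.exp (p / η * u) * g y by
      funext y
      simp only [hgdef]
      rw [← mul_assoc, ← Real.exp_add]
      congr 2
      ring]
    rw [integral_const_mul]
  have hE : HasDerivAt E (E x * (p / η)) x := by
    have h0 : HasDerivAt (fun u : ℝ => p / η * u) (p / η) x := by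
      simpa using (hasDerivAt_id x).const_mul (p / η)
    exact h0.exp
  set B : ℝ := p / η * (E x * (p / η) * G x + E x * -(g x)) with hBdef
  have hK : HasDerivAt K B x := (hE.mul hG).const_mul (p / η)
  have hKpos : 0 < K x := by
    have : 0 < E x * G x := mul_pos (Real.exp_pos _) (hGpos x)
    exact mul_pos (div_pos hp hη) this
  set d : ℝ := B * p⁻¹ * K x ^ (p⁻¹ - 1) with hddef
  have hWd : HasDerivAt (fun z => Wexp p η q t z) d x := by
    have hfun : (fun z => Wexp p η q t z) = fun u => K u ^ p⁻¹ := funext hW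
    rw [hfun]
    exact hK.rpow_const (Or.inl hKpos.ne')
  refine ⟨d, hWd, ?_⟩
  have hEg : E x * g x = q t x ^ p := by
    simp only [hEdef, hgdef]
    rw [← mul_assoc, ← Real.exp_add]
    simp
  set Q : ℝ := q t x ^ p with hQdef
  have hB : B = p / η * K x - p / η * Q := by
    simp only [hBdef, hKdef]
    rw [← hEg]
    ring
  rw [hW x, Real.rpow_inv_rpow hKpos.le hp.ne', ← Real.rpow_mul hKpos.le]
  rw [hddef, hB]
  have hzero : p⁻¹ * (p - 1) + (p⁻¹ - 1) = 0 := by field_simp; ring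
  have hpow : K x ^ (p⁻¹ * (p - 1)) * K x ^ (p⁻¹ - 1) = 1 := by
    rw [← Real.rpow_add hKpos, hzero, Real.rpow_zero]
  have key : η * K x ^ (p⁻¹ * (p - 1)) *
      ((p / η * K x - p / η * Q) * p⁻¹ * K x ^ (p⁻¹ - 1)) = K x - Q := by
    have h1 : η * K x ^ (p⁻¹ * (p - 1)) *
        ((p / η * K x - p / η * Q) * p⁻¹ * K x ^ (p⁻¹ - 1))
        = (K x ^ (p⁻¹ * (p - 1)) * K x ^ (p⁻¹ - 1)) *
          (η * p⁻¹ * (p / η * K x - p / η * Q)) := by ring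
    rw [h1, hpow, one_mul]
    field_simp
  linarith [key]


end
end

section
/- Let p, η > 0, q_min > 0 and q₀ ∈ L^∞(ℝ) with q₀ ≥ q_min a.e. and |q₀|_{TV(ℝ)} < ∞. Define W₀^p(x) := (p/η) ∫_x^∞ e^{p(x−y)/η} q₀(y)^p dy. Then |W₀^p|_{TV(ℝ)} ≤ |q₀^p|_{TV(ℝ)}, and moreover |q₀^p|_{TV(ℝ)} ≤ p ‖q₀‖_{L^∞(ℝ)}^{p−1} |q₀|_{TV(ℝ)} if p ≥ 1, while |q₀^p|_{TV(ℝ)} ≤ p ‖1/q₀‖_{L^∞(ℝ)}^{1−p} |q₀|_{TV(ℝ)} if p ≤ 1. In particular, the total variation of W₀^p is bounded uniformly in η. -/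
open MeasureTheory Real Set Filter Function

noncomputable section

lemma essTV_le (f g : ℝ → ℝ) (hg : g =ᵐ[volume] f) :
    essTV f ≤ eVariationOn g Set.univ := by
  unfold essTV
  exact iInf_le_of_le g (iInf_le_of_le hg le_rfl)

/-- Averaging against an exponential kernel does not increase the total variation. -/
lemma smooth_var_le (h : ℝ → ℝ) (hm : AEStronglyMeasurable h (volume : Measure ℝ))
    {b : ℝ} (hb : 0 < b) (hV : eVariationOn h Set.univ ≠ ⊤) :
    eVariationOn (fun x => b * ∫ s in Set.Ioi (0:ℝ), Real.exp (-(b * s)) * h (x + s)) Set.univ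
      ≤ eVariationOn h Set.univ := by
  set V := eVariationOn h Set.univ with hVdef
  set Vr := V.toReal with hVrdef
  have hVr0 : 0 ≤ Vr := ENNReal.toReal_nonneg
  have hVle : ∀ x y : ℝ, |h x - h y| ≤ Vr := by
    intro x y
    have h1 := eVariationOn.edist_le h (mem_univ x) (mem_univ y)
    rw [edist_dist, Real.dist_eq] at h1
    exact (ENNReal.ofReal_le_iff_le_toReal hV).1 h1
  set B := |h 0| + Vr with hBdef
  have hB : ∀ x, |h x| ≤ B := by
    intro x
    have : |h x| - |h 0| ≤ |h x - h 0| := abs_sub_abs_le_abs_sub _ _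
    have := this.trans (hVle x 0)
    rw [hBdef]; linarith
  have hexp : IntegrableOn (fun s : ℝ => Real.exp (-(b * s))) (Set.Ioi 0) := by
    simpa [neg_mul] using exp_neg_integrableOn_Ioi 0 hb
  have hexp_val : (∫ s in Set.Ioi (0:ℝ), Real.exp (-(b * s))) = b⁻¹ := by
    have h1 := integral_comp_mul_left_Ioi (fun s => Real.exp (-s)) 0 hb
    simp only [mul_zero, integral_exp_neg_Ioi_zero, smul_eq_mul, mul_one] at h1
    exact h1
  have hshift : ∀ x : ℝ, AEStronglyMeasurable (fun s => h (x + s)) (volume : Measure ℝ) := by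
    intro x
    exact hm.comp_quasiMeasurePreserving
      (measurePreserving_add_left volume x).quasiMeasurePreserving
  have hcont : Continuous (fun s : ℝ => Real.exp (-(b * s))) := by continuity
  have hint : ∀ x : ℝ, IntegrableOn (fun s => Real.exp (-(b * s)) * h (x + s)) (Set.Ioi 0) := by
    intro x
    refine Integrable.mono' (hexp.const_mul B) ?_ ?_
    · exact (hcont.aestronglyMeasurable.mul (hshift x)).restrict
    · refine ae_of_all _ fun s => ?_
      rw [Real.norm_eq_abs, abs_mul, abs_of_pos (Real.exp_pos _), mul_comm B]
      exact mul_le_mul_of_nonneg_left (hB _) (Real.exp_pos _).le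
  have hΔint : ∀ a a' : ℝ,
      IntegrableOn (fun s => Real.exp (-(b * s)) * |h (a + s) - h (a' + s)|) (Set.Ioi 0) := by
    intro a a'
    refine (((hint a).sub (hint a')).abs).congr ?_
    refine ae_of_all _ fun s => ?_
    simp only [Pi.sub_apply]
    rw [← mul_sub, abs_mul, abs_of_pos (Real.exp_pos _)]
  apply iSup_le
  rintro ⟨n, u, hu, -⟩
  simp only
  set F := fun x => b * ∫ s in Set.Ioi (0:ℝ), Real.exp (-(b * s)) * h (x + s) with hFdef
  have key : ∀ s : ℝ, (∑ i ∈ Finset.range n, |h (u (i+1) + s) - h (u i + s)|) ≤ Vr := by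
    intro s
    have hmono : Monotone fun i => u i + s := fun i j hij => (add_le_add_iff_right s).2 (hu hij)
    have h1 := eVariationOn.sum_le (f := h) (n := n) hmono (fun i => mem_univ (u i + s))
    have h2 : (∑ i ∈ Finset.range n, edist (h (u (i+1) + s)) (h (u i + s)))
        = ENNReal.ofReal (∑ i ∈ Finset.range n, |h (u (i+1) + s) - h (u i + s)|) := by
      rw [ENNReal.ofReal_sum_of_nonneg (fun i _ => abs_nonneg _)]
      exact Finset.sum_congr rfl fun i _ => by rw [edist_dist, Real.dist_eq]
    rw [h2] at h1
    exact (ENNReal.ofReal_le_iff_le_toReal hV).1 h1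
  have hstep : ∀ a a' : ℝ, |F a - F a'|
      ≤ b * ∫ s in Set.Ioi (0:ℝ), Real.exp (-(b * s)) * |h (a + s) - h (a' + s)| := by
    intro a a'
    have hsub : F a - F a'
        = b * ∫ s in Set.Ioi (0:ℝ), Real.exp (-(b * s)) * (h (a + s) - h (a' + s)) := by
      rw [hFdef]
      simp only
      rw [← mul_sub, ← integral_sub (hint a) (hint a')]
      congr 1
      refine integral_congr_ae (ae_of_all _ fun s => ?_)
      ring
    rw [hsub, abs_mul, abs_of_pos hb]
    refine mul_le_mul_of_nonneg_left ?_ hb.le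
    rw [← Real.norm_eq_abs]
    refine (norm_integral_le_integral_norm _).trans (le_of_eq ?_)
    refine integral_congr_ae (ae_of_all _ fun s => ?_)
    simp only [Real.norm_eq_abs]
    rw [abs_mul, abs_of_pos (Real.exp_pos _)]
  have main : (∑ i ∈ Finset.range n, |F (u (i+1)) - F (u i)|) ≤ Vr := by
    calc (∑ i ∈ Finset.range n, |F (u (i+1)) - F (u i)|)
        ≤ ∑ i ∈ Finset.range n,
            b * ∫ s in Set.Ioi (0:ℝ), Real.exp (-(b * s)) * |h (u (i+1) + s) - h (u i + s)| :=
          Finset.sum_le_sum fun i _ => hstep _ _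
      _ = b * ∫ s in Set.Ioi (0:ℝ),
            ∑ i ∈ Finset.range n, Real.exp (-(b * s)) * |h (u (i+1) + s) - h (u i + s)| := by
          rw [← Finset.mul_sum, integral_finset_sum _ (fun i _ => hΔint _ _)]
      _ ≤ b * ∫ s in Set.Ioi (0:ℝ), Real.exp (-(b * s)) * Vr := by
          refine mul_le_mul_of_nonneg_left ?_ hb.le
          refine integral_mono (integrable_finset_sum _ (fun i _ => hΔint _ _))
            (hexp.mul_const Vr) fun s => ?_
          rw [← Finset.mul_sum]
          exact mul_le_mul_of_nonneg_left (key s) (Real.exp_pos _).le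
      _ = b * (b⁻¹ * Vr) := by
          rw [integral_mul_const, hexp_val]
      _ = Vr := by field_simp
  calc (∑ i ∈ Finset.range n, edist (F (u (i+1))) (F (u i)))
      = ENNReal.ofReal (∑ i ∈ Finset.range n, |F (u (i+1)) - F (u i)|) := by
        rw [ENNReal.ofReal_sum_of_nonneg (fun i _ => abs_nonneg _)]
        exact Finset.sum_congr rfl fun i _ => by rw [edist_dist, Real.dist_eq]
    _ ≤ ENNReal.ofReal Vr := ENNReal.ofReal_le_ofReal main
    _ = V := ENNReal.ofReal_toReal hV

set_option maxHeartbeats 1000000 in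
/-- Composition with a power function on a positive interval. -/
lemma essTV_rpow_le (q : ℝ → ℝ) (p lo hi L : ℝ) (hlo : 0 < lo)
    (hmem : ∀ᵐ x : ℝ, q x ∈ Set.Icc lo hi)
    (hL : ∀ x ∈ Set.Icc lo hi, |p * x ^ (p - 1)| ≤ L) :
    essTV (fun x => q x ^ p) ≤ ENNReal.ofReal L * essTV q := by
  have hvol : (volume : Measure ℝ) ≠ 0 := by
    intro h0
    have h1 : (volume (Set.Icc (0:ℝ) 1)) = 1 := by simp [Real.volume_Icc]
    rw [h0] at h1
    simp at h1
  haveI : (ae (volume : Measure ℝ)).NeBot := ae_neBot.2 hvol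
  obtain ⟨x₀, hx₀⟩ := hmem.exists
  have hlohi : lo ≤ hi := le_trans hx₀.1 hx₀.2
  set clamp : ℝ → ℝ := fun t => max lo (min t hi) with hclampdef
  have hclamp_lip : LipschitzWith 1 clamp := (LipschitzWith.id.min_const hi).const_max lo
  have hclamp_mem : ∀ t, clamp t ∈ Set.Icc lo hi := fun t =>
    ⟨le_max_left _ _, max_le hlohi (min_le_right _ _)⟩
  have hclamp_eq : ∀ t ∈ Set.Icc lo hi, clamp t = t := by
    intro t ht
    rw [hclampdef]
    simp only
    rw [min_eq_left ht.2, max_eq_right ht.1]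
  have hlip : LipschitzOnWith L.toNNReal (fun t : ℝ => t ^ p) (Set.Icc lo hi) := by
    refine Convex.lipschitzOnWith_of_nnnorm_hasDerivWithin_le
      (f' := fun x : ℝ => p * x ^ (p - 1)) (convex_Icc lo hi) ?_ ?_
    · intro x hx
      exact (Real.hasDerivAt_rpow_const (Or.inl (hlo.trans_le hx.1).ne')).hasDerivWithinAt
    · intro x hx
      rw [← NNReal.coe_le_coe, coe_nnnorm, Real.norm_eq_abs, Real.coe_toNNReal']
      exact (hL x hx).trans (le_max_left _ _)
  have key : ∀ g : ℝ → ℝ, g =ᵐ[volume] q →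
      essTV (fun x => q x ^ p) ≤ ENNReal.ofReal L * eVariationOn g Set.univ := by
    intro g hg
    have h1 : (fun x => clamp (g x) ^ p) =ᵐ[volume] fun x => q x ^ p := by
      filter_upwards [hg, hmem] with x hgx hqx
      rw [hgx, hclamp_eq _ hqx]
    refine (essTV_le _ _ h1).trans ?_
    have h2 : eVariationOn ((fun t : ℝ => t ^ p) ∘ fun x => clamp (g x)) Set.univ
        ≤ L.toNNReal * eVariationOn (fun x => clamp (g x)) Set.univ :=
      hlip.comp_eVariationOn_le (fun x _ => hclamp_mem (g x))
    have h3 : eVariationOn (clamp ∘ g) Set.univ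
        ≤ ((1 : NNReal) : ENNReal) * eVariationOn g Set.univ :=
      (hclamp_lip.lipschitzOnWith).comp_eVariationOn_le (mapsTo_univ g Set.univ)
    calc eVariationOn (fun x => clamp (g x) ^ p) Set.univ
        ≤ L.toNNReal * eVariationOn (fun x => clamp (g x)) Set.univ := h2
      _ ≤ L.toNNReal * (((1 : NNReal) : ENNReal) * eVariationOn g Set.univ) :=
          mul_le_mul_of_nonneg_left h3 (zero_le')
      _ = ENNReal.ofReal L * eVariationOn g Set.univ := by
          rw [ENNReal.coe_one, one_mul]
          rfl
  haveI : Nonempty {g : ℝ → ℝ // g =ᵐ[volume] q} := ⟨⟨q, EventuallyEq.refl _ _⟩⟩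
  have h4 : essTV (fun x => q x ^ p)
      ≤ ⨅ g : {g : ℝ → ℝ // g =ᵐ[volume] q},
          ENNReal.ofReal L * eVariationOn g.1 Set.univ :=
    le_iInf fun g => key g.1 g.2
  rw [← ENNReal.mul_iInf (fun h => absurd h ENNReal.ofReal_ne_top)] at h4
  refine h4.trans (le_of_eq ?_)
  congr 1
  rw [essTV]
  refine le_antisymm (le_iInf₂ fun g hg => iInf_le (fun g : {g : ℝ → ℝ // g =ᵐ[volume] q} => eVariationOn g.1 Set.univ) ⟨g, hg⟩)
    (le_iInf fun g => iInf_le_of_le g.1 (iInf_le_of_le g.2 le_rfl))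

/-- For `q₀ ∈ L^∞(ℝ)` with `q₀ ≥ q_min > 0` and bounded total variation,
the function `W₀^p(x) = (p/η) ∫_x^∞ e^{p(x-y)/η} q₀(y)^p dy` satisfies
`|W₀^p|_{TV} ≤ |q₀^p|_{TV}`, with `|q₀^p|_{TV} ≤ p ‖q₀‖_∞^{p-1} |q₀|_{TV}` for `p ≥ 1`
and `|q₀^p|_{TV} ≤ p ‖1/q₀‖_∞^{1-p} |q₀|_{TV}` for `p ≤ 1`; in particular the bound is
uniform in `η > 0`. -/
theorem TV_bound_initial_Wp
    (p qmin : ℝ) (q₀ : ℝ → ℝ)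
    (hp : 0 < p) (hqmin : 0 < qmin)
    (hq₀meas : Measurable q₀)
    (hq₀low : ∀ᵐ x : ℝ, qmin ≤ q₀ x)
    (hq₀bdd : ∃ C : ℝ, ∀ᵐ x : ℝ, |q₀ x| ≤ C)
    (hq₀TV : essTV q₀ < ⊤) :
    ∀ η : ℝ, 0 < η →
      (essTV (fun x =>
          (p / η) * ∫ y in Set.Ioi x, Real.exp (p * (x - y) / η) * q₀ y ^ p)
        ≤ essTV (fun x => q₀ x ^ p)) ∧
      (1 ≤ p → essTV (fun x => q₀ x ^ p)
        ≤ ENNReal.ofReal (p * linf q₀ ^ (p - 1)) * essTV q₀) ∧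
      (p ≤ 1 → essTV (fun x => q₀ x ^ p)
        ≤ ENNReal.ofReal (p * linf (fun x => (q₀ x)⁻¹) ^ (1 - p)) * essTV q₀) := by
  intro η hη
  obtain ⟨C, hC⟩ := hq₀bdd
  have hvol : (volume : Measure ℝ) ≠ 0 := by
    intro h0
    have h1 : (volume (Set.Icc (0:ℝ) 1)) = 1 := by simp [Real.volume_Icc]
    rw [h0] at h1
    simp at h1
  haveI : (ae (volume : Measure ℝ)).NeBot := ae_neBot.2 hvol
  have hq0pos : ∀ᵐ x : ℝ, 0 < q₀ x := hq₀low.mono fun x h => hqmin.trans_le h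
  set M := linf q₀ with hMdef
  have hMbdd : IsBoundedUnder (· ≤ ·) (ae (volume : Measure ℝ)) fun x => |q₀ x| :=
    ⟨C, eventually_map.2 hC⟩
  have hM_ub : ∀ᵐ x : ℝ, |q₀ x| ≤ M := ae_le_essSup hMbdd
  have hq_le_M : ∀ᵐ x : ℝ, q₀ x ≤ M := hM_ub.mono fun x h => (le_abs_self _).trans h
  have hqmM : qmin ≤ M := by
    obtain ⟨x, h1, h2⟩ := (hq₀low.and hq_le_M).exists
    exact h1.trans h2
  have hMpos : 0 < M := hqmin.trans_le hqmM
  have hqp_meas : Measurable fun x => q₀ x ^ p :=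
    (Real.continuous_rpow_const hp.le).measurable.comp hq₀meas
  refine ⟨?_, ?_, ?_⟩
  · -- smoothing bound
    conv_rhs => rw [essTV]
    refine le_iInf₂ fun h hh => ?_
    by_cases hV : eVariationOn h Set.univ = ⊤
    · rw [hV]; exact le_top
    have hh' : h =ᵐ[volume] fun x => q₀ x ^ p := hh
    have hhm : AEStronglyMeasurable h (volume : Measure ℝ) :=
      hqp_meas.aestronglyMeasurable.congr hh'.symm
    set b := p / η with hbdef
    have hbpos : 0 < b := div_pos hp hη
    have hW : (fun x => (p / η) * ∫ y in Set.Ioi x, Real.exp (p * (x - y) / η) * q₀ y ^ p)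
        = fun x => b * ∫ s in Set.Ioi (0:ℝ), Real.exp (-(b * s)) * h (x + s) := by
      funext x
      have e1 : (∫ y in Set.Ioi x, Real.exp (p * (x - y) / η) * q₀ y ^ p)
          = ∫ y in Set.Ioi x, Real.exp (p * (x - y) / η) * h y := by
        refine setIntegral_congr_ae measurableSet_Ioi ?_
        filter_upwards [hh'] with y hy _
        rw [hy]
      set G : ℝ → ℝ := fun y => Real.exp (p * (x - y) / η) * h y with hG
      have e2 : (∫ y in Set.Ioi x, G y)
          = ∫ s in Set.Ioi (0:ℝ), Real.exp (-(b * s)) * h (x + s) := by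
        have i1 : (∫ y in Set.Ioi x, G y) = ∫ y, (Set.Ioi x).indicator G y :=
          (integral_indicator measurableSet_Ioi).symm
        have i2 : (∫ y, (Set.Ioi x).indicator G y)
            = ∫ s, (Set.Ioi x).indicator G (x + s) :=
          (integral_add_left_eq_self ((Set.Ioi x).indicator G) x).symm
        have i3 : ∀ s : ℝ, (Set.Ioi x).indicator G (x + s)
            = (Set.Ioi (0:ℝ)).indicator (fun s => Real.exp (-(b * s)) * h (x + s)) s := by
          intro s
          by_cases hs : 0 < s
          · rw [indicator_of_mem (mem_Ioi.2 (lt_add_of_pos_right x hs)),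
              indicator_of_mem (mem_Ioi.2 hs), hG]
            simp only
            rw [show p * (x - (x + s)) / η = -(b * s) by rw [hbdef]; ring]
          · rw [indicator_of_notMem (fun hmem => hs (by simpa using mem_Ioi.1 hmem)),
              indicator_of_notMem (fun hmem => hs (mem_Ioi.1 hmem))]
        rw [i1, i2]
        simp_rw [i3]
        rw [integral_indicator measurableSet_Ioi]
      rw [e1]
      rw [show (∫ y in Set.Ioi x, Real.exp (p * (x - y) / η) * h y) = ∫ y in Set.Ioi x, G y from rfl]
      rw [e2, hbdef]
    rw [hW]
    exact (essTV_le _ _ (EventuallyEq.refl _ _)).trans (smooth_var_le h hhm hbpos hV)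
  · -- p ≥ 1
    intro hp1
    refine essTV_rpow_le q₀ p qmin M (p * M ^ (p - 1)) hqmin ?_ ?_
    · filter_upwards [hq₀low, hq_le_M] with x h1 h2
      exact ⟨h1, h2⟩
    · intro x hx
      have hx0 : 0 ≤ x := (hqmin.trans_le hx.1).le
      rw [abs_of_nonneg (mul_nonneg hp.le (Real.rpow_nonneg hx0 _))]
      exact mul_le_mul_of_nonneg_left
        (Real.rpow_le_rpow hx0 hx.2 (by linarith)) hp.le
  · -- p ≤ 1
    intro hp1
    set m := linf fun x => (q₀ x)⁻¹ with hmdef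
    have hm_bdd : IsBoundedUnder (· ≤ ·) (ae (volume : Measure ℝ)) fun x => |(q₀ x)⁻¹| := by
      refine ⟨qmin⁻¹, eventually_map.2 ?_⟩
      filter_upwards [hq₀low] with x h
      rw [abs_of_pos (inv_pos.2 (hqmin.trans_le h))]
      exact inv_anti₀ hqmin h
    have hm_ub : ∀ᵐ x : ℝ, |(q₀ x)⁻¹| ≤ m := ae_le_essSup hm_bdd
    have hq_lb : ∀ᵐ x : ℝ, (q₀ x)⁻¹ ≤ m := hm_ub.mono fun x h => (le_abs_self _).trans h
    have hmpos : 0 < m := by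
      obtain ⟨x, h1, h2⟩ := (hq0pos.and hq_lb).exists
      exact (inv_pos.2 h1).trans_le h2
    have hqm : ∀ᵐ x : ℝ, m⁻¹ ≤ q₀ x := by
      filter_upwards [hq0pos, hq_lb] with x h1 h2
      have := inv_anti₀ (inv_pos.2 h1) h2
      rwa [inv_inv] at this
    refine essTV_rpow_le q₀ p m⁻¹ M (p * m ^ (1 - p)) (inv_pos.2 hmpos) ?_ ?_
    · filter_upwards [hqm, hq_le_M] with x h1 h2
      exact ⟨h1, h2⟩
    · intro x hx
      have hx0 : 0 ≤ x := ((inv_pos.2 hmpos).trans_le hx.1).le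
      rw [abs_of_nonneg (mul_nonneg hp.le (Real.rpow_nonneg hx0 _))]
      refine mul_le_mul_of_nonneg_left ?_ hp.le
      have h1 : x ^ (p - 1) ≤ (m⁻¹) ^ (p - 1) :=
        Real.rpow_le_rpow_of_nonpos (inv_pos.2 hmpos) hx.1 (by linarith)
      refine h1.trans (le_of_eq ?_)
      rw [Real.inv_rpow hmpos.le, ← Real.rpow_neg hmpos.le]
      ring_nf
  
end
end
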